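/- For every integer i ≥ 5 there exists a maximal prefix code P ⊆ {0,1}* ∪ {0,1}*# over the three-letter alphabet {0,1,#} with |P| = 1 + 2i, and three pairwise distinct words u, v, w ∈ {0,1}* such that all nine words u0, u1, u#, v0, v1, v#, w0, w1, w# belong to P. -/

import Mathlib

/-- The three-letter alphabet {0,1,#}. -/
inductive Alph3 : Type
  | b0 | b1 | hash
  deriving DecidableEq

/-- A prefix code: no element is a strict prefix of another element. -/
def PrefixCode {α : Type*} (C : Set (List α)) : Prop :=
  ∀ u ∈ C, ∀ v ∈ C, u <+: v → u = v

/-- A maximal prefix code among sets of words contained in `W`: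
a prefix code `C ⊆ W` that is not a strict subset of any prefix code `⊆ W`. -/
def MaxPrefixCodeOn {α : Type*} (W C : Set (List α)) : Prop :=
  C ⊆ W ∧ PrefixCode C ∧
    ∀ D : Set (List α), D ⊆ W → PrefixCode D → C ⊆ D → D = C

/-- A maximal prefix code over the full alphabet. -/
def MaxPrefixCode {α : Type*} (C : Set (List α)) : Prop :=
  MaxPrefixCodeOn Set.univ C

/-- {0,1}* : the words over the sub-alphabet {0,1} (no # occurs). -/
def BitWords : Set (List Alph3) := {w | Alph3.hash ∉ w}

/-- {0,1}*# : the words v# with v ∈ {0,1}*. -/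
def HashedWords : Set (List Alph3) := {w | ∃ v ∈ BitWords, w = v ++ [Alph3.hash]}

namespace Aux14

open Alph3

instance : Fintype Alph3 :=
  ⟨⟨{Alph3.b0, Alph3.b1, Alph3.hash}, by decide⟩, fun x => by cases x <;> decide⟩

/-- Completeness: every word is prefix-comparable with a code word. -/
def Complete (C : Set (List Alph3)) : Prop :=
  ∀ z : List Alph3, ∃ p ∈ C, p <+: z ∨ z <+: p

lemma maxPrefixCode_of_complete {C : Set (List Alph3)} (hpc : PrefixCode C)
    (hc : Complete C) : MaxPrefixCode C := by
  refine ⟨Set.subset_univ _, hpc, ?_⟩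
  intro D _ hD hsub
  refine Set.Subset.antisymm ?_ hsub
  intro z hz
  obtain ⟨p, hp, hcomp⟩ := hc z
  have hpD := hsub hp
  rcases hcomp with h | h
  · rw [← hD p hpD z hz h]; exact hp
  · rw [hD z hz p hpD h]; exact hp

lemma concat_inj {x y : List Alph3} {a b : Alph3} (h : x ++ [a] = y ++ [b]) :
    x = y ∧ a = b := by
  obtain ⟨h1, h2⟩ := List.append_inj' h rfl
  exact ⟨h1, by simpa using h2⟩

lemma parent_not_mem {C : Set (List Alph3)} (hpc : PrefixCode C) {x : List Alph3}
    {a : Alph3} (h : x ++ [a] ∈ C) : x ∉ C := by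
  intro hx
  have := hpc x hx _ h ⟨[a], rfl⟩
  simp at this

lemma bit_concat_mem {x : List Alph3} (hx : x ∈ BitWords) {a : Alph3}
    (ha : a ≠ Alph3.hash) : x ++ [a] ∈ BitWords := by
  simp only [BitWords, Set.mem_setOf_eq, List.mem_append, List.mem_singleton] at *
  rintro (h | h)
  · exact hx h
  · exact ha h.symm

lemma hash_concat_mem {x : List Alph3} (hx : x ∈ BitWords) :
    x ++ [Alph3.hash] ∈ HashedWords := ⟨x, hx, rfl⟩

lemma complete_of_length {C : Set (List Alph3)} {n : ℕ}
    (h : ∀ z : List Alph3, z.length = n → ∃ p ∈ C, p <+: z) : Complete C := by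
  intro z
  rcases le_or_gt n z.length with hn | hn
  · obtain ⟨p, hp, hpre⟩ := h (z.take n) (by simp [min_eq_left hn])
    exact ⟨p, hp, Or.inl (hpre.trans (List.take_prefix n z))⟩
  · obtain ⟨p, hp, hpre⟩ := h (z ++ List.replicate (n - z.length) Alph3.b0)
      (by simp; omega)
    rcases List.prefix_or_prefix_of_prefix hpre (List.prefix_append z _) with h' | h'
    · exact ⟨p, hp, Or.inl h'⟩
    · exact ⟨p, hp, Or.inr h'⟩

/-- The expansion step: replace a bit-word `x` in a code by its three children. -/
lemma expand {C : Set (List Alph3)} {x : List Alph3} (hx : x ∈ C)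
    (hpc : PrefixCode C) (hcom : Complete C) :
    PrefixCode ((C \ {x}) ∪ {x ++ [b0], x ++ [b1], x ++ [hash]}) ∧
    Complete ((C \ {x}) ∪ {x ++ [b0], x ++ [b1], x ++ [hash]}) := by
  set C' := (C \ {x}) ∪ {x ++ [b0], x ++ [b1], x ++ [hash]} with hC'
  have hmemC' : ∀ y ∈ C', (y ∈ C ∧ y ≠ x) ∨ ∃ a, y = x ++ [a] := by
    intro y hy
    rcases hy with ⟨hyC, hyx⟩ | hy
    · exact Or.inl ⟨hyC, by simpa using hyx⟩
    · rcases hy with h | h | h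
      exacts [Or.inr ⟨b0, h⟩, Or.inr ⟨b1, h⟩, Or.inr ⟨hash, h⟩]
  constructor
  · intro u hu v hv huv
    rcases hmemC' u hu with ⟨huC, hux⟩ | ⟨a, rfl⟩ <;>
      rcases hmemC' v hv with ⟨hvC, hvx⟩ | ⟨b, rfl⟩
    · exact hpc u huC v hvC huv
    · rcases List.prefix_concat_iff.mp huv with h | h
      · exact h
      · exact absurd (hpc u huC x hx h) hux
    · have : x = v := hpc x hx v hvC (((List.prefix_append x [a]) : x <+: x ++ [a]).trans huv)
      exact absurd this.symm hvx
    · exact huv.eq_of_length_le (by simp)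
  · intro z
    obtain ⟨p, hp, hcomp⟩ := hcom z
    by_cases hpx : p = x
    · subst hpx
      rcases hcomp with h | h
      · obtain ⟨r, rfl⟩ := h
        cases r with
        | nil =>
          exact ⟨p ++ [b0], Or.inr (by simp), Or.inr (by simp)⟩
        | cons a r' =>
          refine ⟨p ++ [a], ?_, Or.inl ⟨r', by simp⟩⟩
          cases a
          · exact Or.inr (by simp)
          · exact Or.inr (by simp)
          · exact Or.inr (by simp)
      · exact ⟨p ++ [b0], Or.inr (by simp), Or.inr (h.trans (List.prefix_append p _))⟩
    · exact ⟨p, Or.inl ⟨hp, by simpa using hpx⟩, hcomp⟩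

/-- The base code, for `i = 5`. -/
def base : Finset (List Alph3) :=
  {[b0,b0,b0],[b0,b0,b1],[b0,b1,b0],[b0,b1,b1],[b1,b0],[b1,b1],
   [hash],[b0,hash],[b1,hash],[b0,b0,hash],[b0,b1,hash]}

/-- The inductive invariant. -/
def Q (i : ℕ) : Prop :=
  ∃ P : Set (List Alph3), P.Finite ∧
    P ⊆ BitWords ∪ HashedWords ∧ PrefixCode P ∧ Complete P ∧ P.ncard = 1 + 2 * i ∧
    ∃ u ∈ BitWords, ∃ v ∈ BitWords, ∃ w ∈ BitWords,
      u ≠ v ∧ u ≠ w ∧ v ≠ w ∧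
      u ++ [Alph3.b0] ∈ P ∧ u ++ [Alph3.b1] ∈ P ∧ u ++ [Alph3.hash] ∈ P ∧
      v ++ [Alph3.b0] ∈ P ∧ v ++ [Alph3.b1] ∈ P ∧ v ++ [Alph3.hash] ∈ P ∧
      w ++ [Alph3.b0] ∈ P ∧ w ++ [Alph3.b1] ∈ P ∧ w ++ [Alph3.hash] ∈ P ∧
      ∃ t ∈ P, t ∈ BitWords ∧ t ≠ u ++ [Alph3.b0] ∧ t ≠ u ++ [Alph3.b1] ∧
        t ≠ v ++ [Alph3.b0] ∧ t ≠ v ++ [Alph3.b1]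

lemma base_q : Q 5 := by
  refine ⟨(base : Set (List Alph3)), (base : Finset _).finite_toSet, ?_, ?_, ?_, ?_, ?_⟩
  · intro z hz
    simp only [base, Finset.coe_insert, Set.mem_insert_iff, Finset.coe_singleton,
      Set.mem_singleton_iff] at hz
    have hb : ∀ l : List Alph3, Alph3.hash ∉ l → l ∈ BitWords := fun l h => h
    rcases hz with rfl|rfl|rfl|rfl|rfl|rfl|rfl|rfl|rfl|rfl|rfl
    · exact Or.inl (hb _ (by decide))
    · exact Or.inl (hb _ (by decide))
    · exact Or.inl (hb _ (by decide))
    · exact Or.inl (hb _ (by decide))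
    · exact Or.inl (hb _ (by decide))
    · exact Or.inl (hb _ (by decide))
    · exact Or.inr ⟨[], hb _ (by decide), rfl⟩
    · exact Or.inr ⟨[b0], hb _ (by decide), rfl⟩
    · exact Or.inr ⟨[b1], hb _ (by decide), rfl⟩
    · exact Or.inr ⟨[b0,b0], hb _ (by decide), rfl⟩
    · exact Or.inr ⟨[b0,b1], hb _ (by decide), rfl⟩
  · intro u hu v hv huv
    have hu' : u ∈ base := hu
    have hv' : v ∈ base := hv
    revert huv
    have : ∀ u ∈ base, ∀ v ∈ base, u <+: v → u = v := by decide
    exact this u hu' v hv'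
  · apply complete_of_length (n := 3)
    intro z hz
    have key : ∀ a b c : Alph3, ∃ p ∈ base, p <+: [a, b, c] := by decide
    match z, hz with
    | [a, b, c], _ =>
      obtain ⟨p, hp, hpre⟩ := key a b c
      exact ⟨p, hp, hpre⟩
  · rw [Set.ncard_coe_finset]; decide
  · have hb : ∀ l : List Alph3, Alph3.hash ∉ l → l ∈ BitWords := fun l h => h
    refine ⟨[b0,b0], hb _ (by decide), [b0,b1], hb _ (by decide), [b1], hb _ (by decide),
      by decide, by decide, by decide, ?_, ?_, ?_, ?_, ?_, ?_, ?_, ?_, ?_,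
      [b1,b0], ?_, hb _ (by decide), by decide, by decide, by decide, by decide⟩
    all_goals
      show _ ∈ base
      decide

lemma step_q (i : ℕ) (h : Q i) : Q (i + 1) := by
  obtain ⟨P, hfin, hsub, hpc, hcom, hcard, u, hu, v, hv, w, hw, huv, huw, hvw,
    hu0, hu1, huh, hv0, hv1, hvh, hw0, hw1, hwh, t, htP, htb, htu0, htu1, htv0, htv1⟩ := h
  -- the expanded code
  set P' := (P \ {t}) ∪ {t ++ [b0], t ++ [b1], t ++ [hash]} with hP'
  obtain ⟨hpc', hcom'⟩ := expand htP hpc hcom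
  -- generic facts
  have hnotmem : ∀ a : Alph3, t ++ [a] ∉ P := by
    intro a ha
    have := hpc t htP _ ha ⟨[a], rfl⟩
    simp at this
  have hfin' : P'.Finite := by
    exact Set.Finite.union hfin.diff (((Set.finite_singleton _).insert _).insert _)
  have hsub' : P' ⊆ BitWords ∪ HashedWords := by
    intro z hz
    rcases hz with ⟨hzP, _⟩ | hz
    · exact hsub hzP
    · rcases hz with rfl | rfl | rfl
      · exact Or.inl (bit_concat_mem htb (by decide))
      · exact Or.inl (bit_concat_mem htb (by decide))
      · exact Or.inr (hash_concat_mem htb)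
  have hcard' : P'.ncard = 1 + 2 * (i + 1) := by
    have hdisj : Disjoint (P \ {t}) {t ++ [b0], t ++ [b1], t ++ [hash]} := by
      rw [Set.disjoint_right]
      rintro z (rfl | rfl | rfl) ⟨hzP, _⟩ <;> exact hnotmem _ hzP
    rw [hP', Set.ncard_union_eq hdisj hfin.diff
      (((Set.finite_singleton _).insert _).insert _),
      Set.ncard_diff_singleton_of_mem htP]
    have h3 : ({t ++ [b0], t ++ [b1], t ++ [hash]} : Set (List Alph3)).ncard = 3 := by
      rw [Set.ncard_eq_three]
      refine ⟨_, _, _, ?_, ?_, ?_, rfl⟩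
      · intro h; exact absurd (concat_inj h).2 (by decide)
      · intro h; exact absurd (concat_inj h).2 (by decide)
      · intro h; exact absurd (concat_inj h).2 (by decide)
    rw [h3, hcard]
    omega
  -- membership preservation
  have hkeep : ∀ z ∈ P, z ≠ t → z ∈ P' := fun z hz hzt => Or.inl ⟨hz, hzt⟩
  have hnew : ∀ a : Alph3, t ++ [a] ∈ P' := by
    rintro a; right; cases a
    · left; rfl
    · right; left; rfl
    · right; right; rfl
  -- u, v are not in P (their children are)
  have huP : u ∉ P := parent_not_mem hpc hu0
  have hvP : v ∉ P := parent_not_mem hpc hv0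
  have htu : t ≠ u := fun h => huP (h ▸ htP)
  have htv : t ≠ v := fun h => hvP (h ▸ htP)
  -- hash children differ from t since t is a bit word
  have hth : ∀ y : List Alph3, t ≠ y ++ [Alph3.hash] := by
    intro y h
    apply htb
    rw [h]
    simp [List.mem_append]
  -- u's and v's children survive
  have hu0' : u ++ [b0] ∈ P' := hkeep _ hu0 (Ne.symm htu0)
  have hu1' : u ++ [b1] ∈ P' := hkeep _ hu1 (Ne.symm htu1)
  have huh' : u ++ [hash] ∈ P' := hkeep _ huh (Ne.symm (hth u))
  have hv0' : v ++ [b0] ∈ P' := hkeep _ hv0 (Ne.symm htv0)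
  have hv1' : v ++ [b1] ∈ P' := hkeep _ hv1 (Ne.symm htv1)
  have hvh' : v ++ [hash] ∈ P' := hkeep _ hvh (Ne.symm (hth v))
  by_cases hcase : t = w ++ [b0] ∨ t = w ++ [b1]
  · -- t was a child of w: new triple (u, v, t), spare = the other child of w
    have htw : t ≠ w := by
      rcases hcase with h | h <;> intro h' <;> rw [h'] at h <;>
        exact absurd (congrArg List.length h) (by simp)
    refine ⟨P', hfin', hsub', hpc', hcom', hcard',
      u, hu, v, hv, t, htb, huv, Ne.symm htu, Ne.symm htv,
      hu0', hu1', huh', hv0', hv1', hvh', hnew b0, hnew b1, hnew hash, ?_⟩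
    -- spare element
    rcases hcase with h | h
    · refine ⟨w ++ [b1], hkeep _ hw1 ?_, bit_concat_mem hw (by decide), ?_, ?_, ?_, ?_⟩
      · rw [h]; intro h'
        exact absurd (concat_inj h').2 (by decide)
      · intro h'; exact absurd (concat_inj h').2 (by decide)
      · intro h'; exact huw (concat_inj h').1.symm
      · intro h'; exact absurd (concat_inj h').2 (by decide)
      · intro h'; exact hvw (concat_inj h').1.symm
    · refine ⟨w ++ [b0], hkeep _ hw0 ?_, bit_concat_mem hw (by decide), ?_, ?_, ?_, ?_⟩
      · rw [h]; intro h'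
        exact absurd (concat_inj h').2 (by decide)
      · intro h'; exact huw (concat_inj h').1.symm
      · intro h'; exact absurd (concat_inj h').2 (by decide)
      · intro h'; exact hvw (concat_inj h').1.symm
      · intro h'; exact absurd (concat_inj h').2 (by decide)
  · -- t is not a child of w: keep the triple, spare = t ++ [b0]
    push_neg at hcase
    obtain ⟨htw0, htw1⟩ := hcase
    have htw : t ≠ w := fun h => (parent_not_mem hpc hw0) (h ▸ htP)
    refine ⟨P', hfin', hsub', hpc', hcom', hcard',
      u, hu, v, hv, w, hw, huv, huw, hvw,
      hu0', hu1', huh', hv0', hv1', hvh',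
      hkeep _ hw0 (Ne.symm htw0), hkeep _ hw1 (Ne.symm htw1),
      hkeep _ hwh (Ne.symm (hth w)), ?_⟩
    refine ⟨t ++ [b0], hnew b0, bit_concat_mem htb (by decide), ?_, ?_, ?_, ?_⟩
    · intro h'; exact htu (concat_inj h').1
    · intro h'; exact absurd (concat_inj h').2 (by decide)
    · intro h'; exact htv (concat_inj h').1
    · intro h'; exact absurd (concat_inj h').2 (by decide)

lemma q_all (i : ℕ) (hi : 5 ≤ i) : Q i := by
  induction i, hi using Nat.le_induction with
  | base => exact base_q
  | succ n hn ih => exact step_q n ih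

end Aux14

theorem statement14 (i : ℕ) (hi : 5 ≤ i) :
    ∃ P : Set (List Alph3), P.Finite ∧
      P ⊆ BitWords ∪ HashedWords ∧ MaxPrefixCode P ∧ P.ncard = 1 + 2 * i ∧
      ∃ u ∈ BitWords, ∃ v ∈ BitWords, ∃ w ∈ BitWords,
        u ≠ v ∧ u ≠ w ∧ v ≠ w ∧
        u ++ [Alph3.b0] ∈ P ∧ u ++ [Alph3.b1] ∈ P ∧ u ++ [Alph3.hash] ∈ P ∧
        v ++ [Alph3.b0] ∈ P ∧ v ++ [Alph3.b1] ∈ P ∧ v ++ [Alph3.hash] ∈ P ∧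
        w ++ [Alph3.b0] ∈ P ∧ w ++ [Alph3.b1] ∈ P ∧ w ++ [Alph3.hash] ∈ P := by
  obtain ⟨P, hfin, hsub, hpc, hcom, hcard, u, hu, v, hv, w, hw, huv, huw, hvw,
    hu0, hu1, huh, hv0, hv1, hvh, hw0, hw1, hwh, _⟩ := Aux14.q_all i hi
  exact ⟨P, hfin, hsub, Aux14.maxPrefixCode_of_complete hpc hcom, hcard,
    u, hu, v, hv, w, hw, huv, huw, hvw, hu0, hu1, huh, hv0, hv1, hvh, hw0, hw1, hwh⟩
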